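/- In the quotient description of the twisted de Rham cohomology of the quintic family, the class ω_{ijknms} = (λt x₀⁵)^i(λt x₁⁵)^j(λt x₂⁵)^k(λt x₃⁵)^n(λt x₄⁵)^m (tx)^s dx dt satisfies the s-relation δ ω_{ijknms} = −(s+1) ω_{ijknms} − π ω_{ijknm(s+1)}, where δ = λ∂_λ + π t λ(x₀⁵+...+x₄⁵) and one works modulo the images of the operators ∂_{x_i} + πt(5λx_i⁴ + x₀⋯x̂_i⋯x₄) and ∂_t + πφ_λ, with φ_λ = λ(Σ x_i⁵) + x₀x₁x₂x₃x₄. Algebraically: in the quotient of the polynomial ring K[x₀,...,x₄,t,λ^{±1}] (K a field of characteristic 0 containing π) by the ideal-like subspace spanned by the images of D_i = ∂_{x_i} + π∂_{x_i}(tφ_λ) and D_t = ∂_t + πφ_λ, the operator δ acts on the monomial ω_{ijknms} as stated. -/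

import Mathlib

/-! The twisted relative de Rham complex for the quintic family: we work in
`L = K[x₀,…,x₄,t][λ^{±1}]`, realized as Laurent polynomials in `λ` over the
multivariate polynomial ring `A = K[x₀,…,x₄,t]` (variables `0,…,4` are `x₀,…,x₄`
and variable `5` is `t`), modulo the span of the images of the operators
`D_r = ∂_{x_r} + πt(5λx_r⁴ + x₀⋯x̂_r⋯x₄)` and `D_t = ∂_t + πφ_λ`,
where `φ_λ = λ(Σ x_r⁵) + x₀x₁x₂x₃x₄`. -/

noncomputable section

open MvPolynomial
local notation "Cλ" => LaurentPolynomial.C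
local notation "Tλ" => LaurentPolynomial.T

variable {K : Type*}

/-- The coefficient ring `A = K[x₀,…,x₄,t]`. -/
abbrev A (K : Type*) [Field K] := MvPolynomial (Fin 6) K

/-- `L = A[λ^{±1}]`. -/
abbrev L (K : Type*) [Field K] := LaurentPolynomial (A K)

variable [Field K] [CharZero K]

/-- `t`. -/
def tA : A K := X 5
/-- `x = x₀x₁x₂x₃x₄`. -/
def xprod : A K := ∏ r : Fin 5, X r.castSucc
/-- `Σ_r x_r⁵`. -/
def sumx5 : A K := ∑ r : Fin 5, X r.castSucc ^ 5

/-- Partial derivative `∂` (in one of the variables `x₀,…,x₄,t`) extended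
coefficientwise to `L`. -/
def pdL (r : Fin 6) (f : L K) : L K :=
  AddMonoidAlgebra.ofCoeff (Finsupp.mapRange (⇑(pderiv r)) (map_zero _) f.coeff)

/-- `λ ∂_λ` on `L`. -/
def lamDlam (f : L K) : L K :=
  AddMonoidAlgebra.ofCoeff (f.coeff.sum fun n a => Finsupp.single n (n • a))

lemma CT (a : A K) (p : ℤ) : Cλ a * Tλ p = (AddMonoidAlgebra.single p a : L K) :=
  (LaurentPolynomial.single_eq_C_mul_T a p).symm

lemma pdL_CT (r : Fin 6) (a : A K) (p : ℤ) :
    pdL r (Cλ a * Tλ p) = Cλ (pderiv r a) * Tλ p := by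
  rw [CT, CT, pdL, AddMonoidAlgebra.coeff_single, Finsupp.mapRange_single,
    AddMonoidAlgebra.ofCoeff_single]

lemma lamDlam_CT (a : A K) (p : ℤ) :
    lamDlam (Cλ a * Tλ p) = Cλ (p • a) * Tλ p := by
  rw [CT, CT, lamDlam, AddMonoidAlgebra.coeff_single, Finsupp.sum_single_index,
    AddMonoidAlgebra.ofCoeff_single]; simp

lemma smul_CT (c : K) (a : A K) (p : ℤ) :
    c • (Cλ a * Tλ p) = Cλ (c • a) * Tλ p := by
  rw [CT, CT]; exact AddMonoidAlgebra.smul_single _ _ _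

lemma CT_mul (a b : A K) (p q : ℤ) :
    (Cλ a * Tλ p) * (Cλ b * Tλ q) = Cλ (a * b) * Tλ (p + q) := by
  rw [LaurentPolynomial.T_add, map_mul]; ring

/-- The operator `D_r = ∂_{x_r} + πt(5λx_r⁴ + x₀⋯x̂_r⋯x₄)`. -/
def Dx (π : K) (r : Fin 5) (f : L K) : L K :=
  pdL r.castSucc f +
    Cλ (MvPolynomial.C π * tA) *
      ((5 : L K) * Tλ 1 * Cλ (X r.castSucc ^ 4) +
        Cλ (∏ j ∈ Finset.univ.erase r, X j.castSucc)) * f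

/-- The operator `D_t = ∂_t + πφ_λ` with `φ_λ = λ(Σ x_r⁵) + x₀⋯x₄`. -/
def Dt (π : K) (f : L K) : L K :=
  pdL 5 f + Cλ (MvPolynomial.C π) * (Tλ 1 * Cλ sumx5 + Cλ xprod) * f

/-- `δ = λ∂_λ + πtλ(Σ x_r⁵)`. -/
def δop (π : K) (f : L K) : L K :=
  lamDlam f + Cλ (MvPolynomial.C π * tA * sumx5) * Tλ 1 * f

lemma expandDt (u v w a : A K) (D : ℤ) :
    Cλ u * (Tλ 1 * Cλ v + Cλ w) * (Cλ a * Tλ D) =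
      Cλ (u * v * a) * Tλ (1 + D) + Cλ (u * w * a) * Tλ D := by
  rw [mul_add, add_mul]
  congr 1
  · rw [show Cλ u * (Tλ 1 * Cλ v) = Cλ (u * v) * Tλ 1 by rw [map_mul]; ring, CT_mul]
  · rw [← map_mul, ← mul_assoc, ← map_mul]

lemma pderiv5_tA : pderiv (5 : Fin 6) (tA : A K) = 1 := pderiv_X_self 5

lemma pderiv5_X (r : Fin 5) : pderiv (5 : Fin 6) (X r.castSucc : A K) = 0 :=
  pderiv_X_of_ne (Fin.castSucc_lt_last r).ne

lemma pderiv5_xprod : pderiv (5 : Fin 6) (xprod : A K) = 0 := by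
  simp only [xprod, Fin.prod_univ_five, pderiv_mul, pderiv_X, Pi.single_apply]
  norm_num [show (Fin.castSucc 2 : Fin 6) = 2 by rfl, show (Fin.castSucc 3 : Fin 6) = 3 by rfl,
    show (Fin.castSucc 4 : Fin 6) = 4 by rfl, show (2 : Fin 6) ≠ 5 by decide,
    show (3 : Fin 6) ≠ 5 by decide, show (4 : Fin 6) ≠ 5 by decide, show (0 : Fin 6) ≠ 5 by decide, show (1 : Fin 6) ≠ 5 by decide]

lemma helper (π : K) (D s : ℕ) (c : A K) (hc : pderiv (5 : Fin 6) c = 0) :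
    δop π (Cλ (tA ^ (D + s) * c) * Tλ (D : ℤ)) +
      ((s : K) + 1) • (Cλ (tA ^ (D + s) * c) * Tλ (D : ℤ)) +
      π • (Cλ (tA ^ (D + s + 1) * (c * xprod)) * Tλ (D : ℤ)) =
      Dt π (Cλ tA * (Cλ (tA ^ (D + s) * c) * Tλ (D : ℤ))) := by
  have h1 : Cλ (tA : A K) * (Cλ (tA ^ (D + s) * c) * Tλ (D : ℤ)) =
      Cλ (tA ^ (D + s + 1) * c) * Tλ (D : ℤ) := by
    rw [← mul_assoc, ← map_mul, show (tA : A K) * (tA ^ (D + s) * c) = tA ^ (D + s + 1) * c by ring]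
  rw [δop, Dt, h1, pdL_CT, lamDlam_CT, smul_CT, smul_CT, CT_mul, expandDt]
  have hTD : ((D : ℤ) • (tA ^ (D + s) * c) : A K) + ((s : K) + 1) • (tA ^ (D + s) * c) +
      π • (tA ^ (D + s + 1) * (c * xprod)) =
      pderiv (5 : Fin 6) (tA ^ (D + s + 1) * c) +
        MvPolynomial.C π * xprod * (tA ^ (D + s + 1) * c) := by
    rw [pderiv_mul, hc, pderiv_pow, pderiv5_tA, Nat.add_sub_cancel, zsmul_eq_mul,
      smul_eq_C_mul, smul_eq_C_mul, map_add, map_one, map_natCast]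
    push_cast
    ring
  have hT1 : (MvPolynomial.C π * tA * sumx5 * (tA ^ (D + s) * c) : A K) =
      MvPolynomial.C π * sumx5 * (tA ^ (D + s + 1) * c) := by ring
  have hTD' : (Cλ ((D : ℤ) • (tA ^ (D + s) * c)) : L K) + Cλ (((s : K) + 1) • (tA ^ (D + s) * c)) +
      Cλ (π • (tA ^ (D + s + 1) * (c * xprod))) =
      Cλ (pderiv (5 : Fin 6) (tA ^ (D + s + 1) * c)) +
        Cλ (MvPolynomial.C π * xprod * (tA ^ (D + s + 1) * c)) := by
    rw [← map_add, ← map_add, ← map_add, hTD]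
  linear_combination (Tλ (D : ℤ) : L K) * hTD' + (Tλ (1 + D : ℤ) : L K) * congrArg Cλ hT1
/-- The subspace spanned by the images of `D₀, …, D₄` and `D_t`. -/
def N (π : K) : Submodule K (L K) :=
  Submodule.span K ((⋃ r : Fin 5, Set.range (Dx π r)) ∪ Set.range (Dt π))

/-- `ω_{ijknms} = (λtx₀⁵)^i (λtx₁⁵)^j (λtx₂⁵)^k (λtx₃⁵)^n (λtx₄⁵)^m (tx)^s`. -/
def ωc (i j k n m s : ℕ) : L K :=
  (Tλ 1 * Cλ (tA * X (0 : Fin 5).castSucc ^ 5)) ^ i *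
    (Tλ 1 * Cλ (tA * X (1 : Fin 5).castSucc ^ 5)) ^ j *
    (Tλ 1 * Cλ (tA * X (2 : Fin 5).castSucc ^ 5)) ^ k *
    (Tλ 1 * Cλ (tA * X (3 : Fin 5).castSucc ^ 5)) ^ n *
    (Tλ 1 * Cλ (tA * X (4 : Fin 5).castSucc ^ 5)) ^ m *
    Cλ (tA * xprod) ^ s

def cb (i j k n m s : ℕ) : A K :=
  X (0 : Fin 5).castSucc ^ (5 * i) * X (1 : Fin 5).castSucc ^ (5 * j) *
    X (2 : Fin 5).castSucc ^ (5 * k) * X (3 : Fin 5).castSucc ^ (5 * n) *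
    X (4 : Fin 5).castSucc ^ (5 * m) * xprod ^ s

lemma fac (u : A K) (e : ℕ) : (Tλ 1 * Cλ u : L K) ^ e = Cλ (u ^ e) * Tλ (e : ℤ) := by
  rw [mul_pow, ← map_pow, LaurentPolynomial.T_pow, mul_one, mul_comm]

lemma omega_form (i j k n m s : ℕ) :
    (ωc i j k n m s : L K) =
      Cλ (tA ^ (i + j + k + n + m + s) * cb i j k n m s) * Tλ ((i + j + k + n + m : ℕ) : ℤ) := by
  rw [ωc, fac, fac, fac, fac, fac,
    show (Cλ (tA * xprod) ^ s : L K) = Cλ ((tA * xprod) ^ s) * Tλ (0 : ℤ) by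
      rw [← map_pow, LaurentPolynomial.T_zero, mul_one],
    CT_mul, CT_mul, CT_mul, CT_mul, CT_mul]
  rw [show ((tA * X (0 : Fin 5).castSucc ^ 5) ^ i * (tA * X (1 : Fin 5).castSucc ^ 5) ^ j *
      (tA * X (2 : Fin 5).castSucc ^ 5) ^ k * (tA * X (3 : Fin 5).castSucc ^ 5) ^ n *
      (tA * X (4 : Fin 5).castSucc ^ 5) ^ m * (tA * xprod) ^ s : A K) =
      tA ^ (i + j + k + n + m + s) * cb i j k n m s by rw [cb]; ring,
    show ((i : ℤ) + (j : ℤ) + (k : ℤ) + (n : ℤ) + (m : ℤ) + 0 : ℤ) =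
      ((i + j + k + n + m : ℕ) : ℤ) by push_cast; ring]

/-- The `s`-relation: modulo the images of the operators `D_r` and `D_t`,
`δ ω_{ijknms} = -(s+1) ω_{ijknms} - π ω_{ijknm(s+1)}`. -/
theorem stmt17 (π : K) (hπ : π ≠ 0) (i j k n m s : ℕ) :
    δop π (ωc i j k n m s) + ((s : K) + 1) • (ωc i j k n m s : L K) +
      π • ωc i j k n m (s + 1) ∈ N π := by
  have hcb : pderiv (5 : Fin 6) (cb i j k n m s : A K) = 0 := by
    simp only [cb, pderiv_mul, pderiv_pow, pderiv5_xprod, pderiv5_X 0, pderiv5_X 1,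
      pderiv5_X 2, pderiv5_X 3, pderiv5_X 4, mul_zero, zero_mul, add_zero, zero_add]
  rw [omega_form i j k n m s, omega_form i j k n m (s + 1),
    show (i + j + k + n + m + (s + 1) : ℕ) = (i + j + k + n + m + s + 1) by ring,
    show (cb i j k n m (s + 1) : A K) = cb i j k n m s * xprod by rw [cb, cb]; ring,
    helper π (i + j + k + n + m) s (cb i j k n m s) hcb]
  exact Submodule.subset_span (Set.mem_union_right _ ⟨_, rfl⟩)


end
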